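/- The group Bd(ℤ⁺) contains a subgroup isomorphic to ℤ ⊕ ℚ/ℤ. -/

import Mathlib

def Bd (X : Type*) [MetricSpace X] : Subgroup (Equiv.Perm X) where
  carrier := {g : Equiv.Perm X | ∃ r : ℕ, ∀ x : X, dist x (g x) ≤ r}
  one_mem' := ⟨0, fun x => by simp⟩
  mul_mem' := by
    rintro a b ⟨r, hr⟩ ⟨s, hs⟩
    refine ⟨s + r, fun x => ?_⟩
    calc dist x ((a * b) x) ≤ dist x (b x) + dist (b x) (a (b x)) := dist_triangle _ _ _
    _ ≤ (s : ℝ) + r := add_le_add (hs x) (hr (b x))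
    _ = ((s + r : ℕ) : ℝ) := by push_cast; ring
  inv_mem' := by
    rintro a ⟨r, hr⟩
    exact ⟨r, fun x => by simpa [dist_comm] using hr (a⁻¹ x)⟩

namespace BdZQ

abbrev Q : Type := ℚ ⧸ AddSubgroup.zmultiples (1 : ℚ)

/-- factorial-base "value" function. -/
def Adig : ℕ → ℕ → ℕ
  | 0, _ => 0
  | (t+1), N => (t+1) * Adig t N + (N / (Nat.factorial t)) % (t+1)

lemma adig_lt (t N : ℕ) : Adig t N < t.factorial := by
  induction t with
  | zero => simp [Adig, Nat.factorial]
  | succ t ih =>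
    have h2 : N / t.factorial % (t+1) < t + 1 := Nat.mod_lt _ (by omega)
    have : (t+1) * Adig t N + N / t.factorial % (t+1) < (t+1) * t.factorial := by
      nlinarith
    simpa [Adig, Nat.factorial_succ] using this

lemma adig_zero (t : ℕ) : Adig t 0 = 0 := by
  induction t with
  | zero => rfl
  | succ t ih => simp [Adig, ih]

lemma decomp_unique {c r r' s s' : ℕ} (hc : 0 < c) (hr : r < c) (hr' : r' < c)
    (h : r + c * s = r' + c * s') : r = r' ∧ s = s' := by
  constructor
  · have := congrArg (· % c) h
    simpa [Nat.add_mul_mod_self_left, Nat.mod_eq_of_lt hr, Nat.mod_eq_of_lt hr'] using this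
  · have := congrArg (· / c) h
    simpa [Nat.add_mul_div_left _ _ hc, Nat.div_eq_of_lt hr, Nat.div_eq_of_lt hr'] using this

lemma adig_mod_eq_iff {m t : ℕ} (h : m ≤ t) (N M : ℕ) :
    Adig t N % (t.factorial / m.factorial) = Adig t M % (t.factorial / m.factorial) ↔
    N / m.factorial % (t.factorial / m.factorial)
      = M / m.factorial % (t.factorial / m.factorial) := by
  induction t, h using Nat.le_induction with
  | base => simp [Nat.div_self m.factorial_pos, Nat.mod_one]
  | succ t ht ih =>
    have hdvd : m.factorial ∣ t.factorial := Nat.factorial_dvd_factorial ht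
    set K := t.factorial / m.factorial with hK
    have hKpos : 0 < K := Nat.div_pos (Nat.le_of_dvd t.factorial_pos hdvd) m.factorial_pos
    have hKt : K * m.factorial = t.factorial := Nat.div_mul_cancel hdvd
    have hfs : (t+1).factorial / m.factorial = (t+1) * K := by
      rw [Nat.factorial_succ, Nat.mul_div_assoc _ hdvd]
    have hLHS : ∀ x : ℕ, Adig (t+1) x % ((t+1) * K)
        = (x / t.factorial) % (t+1) + (t+1) * (Adig t x % K) := by
      intro x
      show ((t+1) * Adig t x + (x / t.factorial) % (t+1)) % ((t+1) * K) = _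
      rw [Nat.mod_mul]
      congr 1
      · rw [Nat.mul_add_mod]
        exact Nat.mod_eq_of_lt (Nat.mod_lt _ (by omega))
      · congr 1
        rw [Nat.mul_add_div (by omega), Nat.div_eq_of_lt (Nat.mod_lt _ (by omega)), add_zero]
    have hRHS : ∀ x : ℕ, x / m.factorial % ((t+1) * K)
        = x / m.factorial % K + K * ((x / t.factorial) % (t+1)) := by
      intro x
      rw [mul_comm (t+1) K, Nat.mod_mul]
      congr 2
      rw [Nat.div_div_eq_div_mul, mul_comm m.factorial K, hKt]
    rw [hfs, hLHS, hLHS, hRHS, hRHS]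
    constructor
    · intro hh
      obtain ⟨h1, h2⟩ := decomp_unique (by omega) (Nat.mod_lt _ (by omega))
        (Nat.mod_lt _ (by omega)) hh
      rw [ih.mp h2, h1]
    · intro hh
      obtain ⟨h1, h2⟩ := decomp_unique hKpos (Nat.mod_lt _ (by omega))
        (Nat.mod_lt _ (by omega)) hh
      rw [ih.mpr h1, h2]

lemma adig_div {m t : ℕ} (h : m ≤ t) (N : ℕ) :
    Adig t N / (t.factorial / m.factorial) = Adig m N := by
  induction t, h using Nat.le_induction with
  | base => simp [Nat.div_self m.factorial_pos]
  | succ t ht ih =>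
    have hdvd : m.factorial ∣ t.factorial := Nat.factorial_dvd_factorial ht
    have hfs : (t+1).factorial / m.factorial = (t+1) * (t.factorial / m.factorial) := by
      rw [Nat.factorial_succ, Nat.mul_div_assoc _ hdvd]
    rw [hfs, ← Nat.div_div_eq_div_mul]
    show ((t+1) * Adig t N + (N / t.factorial) % (t+1)) / (t+1) / (t.factorial / m.factorial) = _
    rw [Nat.mul_add_div (by omega), Nat.div_eq_of_lt (Nat.mod_lt _ (by omega)),
      add_zero, ih]

lemma adig_eq_of_lt {m t N : ℕ} (h : m ≤ t) (hN : N < m.factorial) :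
    Adig t N = (t.factorial / m.factorial) * Adig m N := by
  have hdvd : m.factorial ∣ t.factorial := Nat.factorial_dvd_factorial h
  have hKpos : 0 < t.factorial / m.factorial :=
    Nat.div_pos (Nat.le_of_dvd t.factorial_pos hdvd) m.factorial_pos
  have hmod : Adig t N % (t.factorial / m.factorial) = 0 := by
    have := (adig_mod_eq_iff h N 0).mpr (by simp [Nat.div_eq_of_lt hN])
    simpa [adig_zero] using this
  rw [← adig_div h N]
  exact (Nat.mul_div_cancel' (Nat.dvd_of_mod_eq_zero hmod)).symm

def F : ℕ → ℚ := fun N => (Adig (N+1) N : ℚ) / (N+1).factorial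

lemma val_eq {m t N : ℕ} (h : m ≤ t) (hN : N < m.factorial) :
    (Adig t N : ℚ) / t.factorial = (Adig m N : ℚ) / m.factorial := by
  have hdvd : m.factorial ∣ t.factorial := Nat.factorial_dvd_factorial h
  have hKt : (t.factorial / m.factorial) * m.factorial = t.factorial := Nat.div_mul_cancel hdvd
  have hKpos : 0 < t.factorial / m.factorial :=
    Nat.div_pos (Nat.le_of_dvd t.factorial_pos hdvd) m.factorial_pos
  have hKQ : ((t.factorial / m.factorial : ℕ) : ℚ) ≠ 0 := by exact_mod_cast hKpos.ne'
  rw [adig_eq_of_lt h hN]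
  have h1 : (t.factorial : ℚ) = ((t.factorial / m.factorial : ℕ) : ℚ) * (m.factorial : ℚ) := by
    exact_mod_cast hKt.symm
  rw [h1]
  push_cast
  rw [mul_div_mul_left _ _ hKQ]

lemma F_eq {t N : ℕ} (h : N < t.factorial) : F N = (Adig t N : ℚ) / t.factorial := by
  have hN1 : N < (N+1).factorial := lt_of_lt_of_le (Nat.lt_succ_self N) (Nat.self_le_factorial _)
  have h1 : F N = (Adig (max (N+1) t) N : ℚ) / (max (N+1) t).factorial :=
    (val_eq (le_max_left _ _) hN1).symm
  rw [h1, val_eq (le_max_right _ _) h]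

lemma F_nonneg (N : ℕ) : 0 ≤ F N := by
  unfold F; positivity

lemma F_lt_one (N : ℕ) : F N < 1 := by
  unfold F
  rw [div_lt_one (by exact_mod_cast (N+1).factorial_pos)]
  exact_mod_cast adig_lt _ _

def Fq : ℕ → Q := fun N => QuotientAddGroup.mk (F N)

lemma mem_zmul {x : ℚ} : x ∈ AddSubgroup.zmultiples (1 : ℚ) ↔ ∃ k : ℤ, (k : ℚ) = x := by
  constructor
  · rintro ⟨k, hk⟩; exact ⟨k, by simpa using hk⟩
  · rintro ⟨k, hk⟩; exact ⟨k, by simpa using hk⟩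

lemma adig_inj {t N M : ℕ} (hN : N < t.factorial) (hM : M < t.factorial)
    (h : Adig t N = Adig t M) : N = M := by
  have h0 : (0:ℕ) ≤ t := Nat.zero_le t
  have := (adig_mod_eq_iff h0 N M).mp (by rw [h])
  simp only [Nat.factorial_zero, Nat.div_one] at this
  rwa [Nat.mod_eq_of_lt hN, Nat.mod_eq_of_lt hM] at this

lemma Fq_injective : Function.Injective Fq := by
  intro N M h
  have h' := (QuotientAddGroup.eq (s := AddSubgroup.zmultiples (1:ℚ))).mp h
  obtain ⟨k, hk⟩ := mem_zmul.mp h'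
  have hN0 := F_nonneg N; have hN1 := F_lt_one N
  have hM0 := F_nonneg M; have hM1 := F_lt_one M
  have hk0 : k = 0 := by
    have h1 : (k : ℚ) < 1 := by rw [hk]; linarith
    have h2 : (-1 : ℚ) < k := by rw [hk]; linarith
    have h1' : k < 1 := by exact_mod_cast h1
    have h2' : -1 < k := by exact_mod_cast h2
    omega
  have hFNM : F N = F M := by rw [hk0] at hk; push_cast at hk; linarith
  set t := max N M + 1 with ht
  have htN : N < t.factorial := lt_of_lt_of_le (by omega) (Nat.self_le_factorial t)
  have htM : M < t.factorial := lt_of_lt_of_le (by omega) (Nat.self_le_factorial t)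
  have heq := hFNM
  rw [F_eq htN, F_eq htM, div_eq_div_iff ((Nat.cast_pos.mpr t.factorial_pos).ne' )
    ((Nat.cast_pos.mpr t.factorial_pos).ne')] at heq
  have hAA : Adig t N = Adig t M := by
    have := mul_right_cancel₀ (b := (t.factorial : ℚ))
      ((Nat.cast_pos.mpr t.factorial_pos).ne') heq
    exact_mod_cast this
  exact adig_inj htN htM hAA

lemma adig_surj (t : ℕ) : ∀ v < t.factorial, ∃ N, N < t.factorial ∧ Adig t N = v := by
  have hinj : Function.Injective
      (fun N : Fin t.factorial => (⟨Adig t N, adig_lt t N⟩ : Fin t.factorial)) := by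
    intro a b hab
    exact Fin.ext (adig_inj a.isLt b.isLt (by simpa using congrArg Fin.val hab))
  have hsurj := Finite.surjective_of_injective hinj
  intro v hv
  obtain ⟨N, hN⟩ := hsurj ⟨v, hv⟩
  exact ⟨N, N.isLt, by simpa using congrArg Fin.val hN⟩

lemma Fq_rep (q : Q) : ∃ t v : ℕ, v < t.factorial ∧
    q = QuotientAddGroup.mk ((v : ℚ) / t.factorial) := by
  obtain ⟨r, rfl⟩ := QuotientAddGroup.mk_surjective q
  set r' : ℚ := Int.fract r with hr'
  have hmk : (QuotientAddGroup.mk r : Q) = QuotientAddGroup.mk r' := by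
    rw [QuotientAddGroup.eq]
    refine mem_zmul.mpr ⟨-⌊r⌋, ?_⟩
    push_cast
    rw [hr', Int.fract]
    ring
  have h0 : 0 ≤ r' := Int.fract_nonneg r
  have h1 : r' < 1 := Int.fract_lt_one r
  set t := r'.den with htd
  have htpos : 0 < t := r'.pos
  have hnum0 : 0 ≤ r'.num := Rat.num_nonneg.mpr h0
  set a := r'.num.toNat with ha
  have hacast : (a : ℚ) = (r'.num : ℚ) := by
    rw [ha]; exact_mod_cast congrArg (Int.cast : ℤ → ℚ) (Int.toNat_of_nonneg hnum0)
  have hat : a < t := by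
    have hlt : r'.num < (r'.den : ℤ) := by
      by_contra hc
      push_neg at hc
      have : (1:ℚ) ≤ (r'.num : ℚ) / r'.den := by
        rw [le_div_iff₀ (by exact_mod_cast htpos), one_mul]
        exact_mod_cast hc
      rw [Rat.num_div_den] at this
      linarith
    omega
  have hdvd : t ∣ t.factorial := Nat.dvd_factorial htpos le_rfl
  refine ⟨t, a * (t.factorial / t), ?_, ?_⟩
  · calc a * (t.factorial / t) < t * (t.factorial / t) :=
          (Nat.mul_lt_mul_right (Nat.div_pos (Nat.le_of_dvd t.factorial_pos hdvd) htpos)).mpr hat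
    _ = t.factorial := Nat.mul_div_cancel' hdvd
  · rw [hmk]
    congr 1
    have hft : ((t.factorial / t : ℕ) : ℚ) * t = t.factorial := by
      exact_mod_cast Nat.div_mul_cancel hdvd
    have htQ : (t : ℚ) ≠ 0 := by exact_mod_cast htpos.ne'
    have hfQ : (t.factorial : ℚ) ≠ 0 := by exact_mod_cast t.factorial_pos.ne'
    rw [← Rat.num_div_den r', ← hacast, ← htd]
    push_cast
    rw [← hft]
    have hKQ' : ((t.factorial / t : ℕ) : ℚ) ≠ 0 := by
      exact_mod_cast (Nat.div_pos (Nat.le_of_dvd t.factorial_pos hdvd) htpos).ne'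
    field_simp

lemma Fq_surjective : Function.Surjective Fq := by
  intro q
  obtain ⟨t, v, hv, rfl⟩ := Fq_rep q
  obtain ⟨N, hN, hAN⟩ := adig_surj t v hv
  exact ⟨N, by rw [Fq, F_eq hN, hAN]⟩

noncomputable def eQ : ℕ ≃ Q := Equiv.ofBijective Fq ⟨Fq_injective, Fq_surjective⟩

lemma eQ_apply (N : ℕ) : eQ N = Fq N := rfl

/-- Core boundedness: adding `q` moves the code by less than `m!` for suitable `m`. -/
lemma eQ_bound (q : Q) : ∃ m : ℕ, ∀ b : ℕ,
    eQ.symm (q + eQ b) / m.factorial = b / m.factorial := by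
  obtain ⟨t, v, hv, rfl⟩ := Fq_rep q
  refine ⟨t, fun b => ?_⟩
  set b' := eQ.symm ((QuotientAddGroup.mk ((v : ℚ) / t.factorial) : Q) + eQ b) with hb'
  have heq : eQ b' = (QuotientAddGroup.mk ((v : ℚ) / t.factorial) : Q) + eQ b :=
    eQ.apply_symm_apply _
  set s := max t (max b b') + 1 with hs
  have hts : t ≤ s := by omega
  have hbs : b < s.factorial := lt_of_lt_of_le (by omega) (Nat.self_le_factorial s)
  have hbs' : b' < s.factorial := lt_of_lt_of_le (by omega) (Nat.self_le_factorial s)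
  have hdvd : t.factorial ∣ s.factorial := Nat.factorial_dvd_factorial hts
  set K := s.factorial / t.factorial with hKdef
  have hKt : K * t.factorial = s.factorial := Nat.div_mul_cancel hdvd
  have hKpos : 0 < K := Nat.div_pos (Nat.le_of_dvd s.factorial_pos hdvd) t.factorial_pos
  -- turn heq into a rational identity
  have heq2 : (QuotientAddGroup.mk (F b') : Q)
      = QuotientAddGroup.mk ((v : ℚ) / t.factorial + F b) := by
    rw [QuotientAddGroup.mk_add]
    exact heq
  obtain ⟨k, hk⟩ := mem_zmul.mp ((QuotientAddGroup.eq
    (s := AddSubgroup.zmultiples (1:ℚ))).mp heq2)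
  -- hk : (k:ℚ) = -(F b') + ((v:ℚ)/t! + F b)
  have hFb : F b = (Adig s b : ℚ) / s.factorial := F_eq hbs
  have hFb' : F b' = (Adig s b' : ℚ) / s.factorial := F_eq hbs'
  have hsQ : (s.factorial : ℚ) ≠ 0 := (Nat.cast_pos.mpr s.factorial_pos).ne'
  have htQ : (t.factorial : ℚ) ≠ 0 := (Nat.cast_pos.mpr t.factorial_pos).ne'
  have hKcast : ((K : ℕ) : ℚ) * (t.factorial : ℚ) = (s.factorial : ℚ) := by
    exact_mod_cast hKt
  have hKQ : ((K:ℕ):ℚ) ≠ 0 := (Nat.cast_pos.mpr hKpos).ne'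
  have h3 : (v : ℚ) / t.factorial = (v : ℚ) * K / s.factorial := by
    rw [← hKcast, mul_comm ((v:ℚ)) ((K:ℕ):ℚ), mul_div_mul_left _ _ hKQ]
  have hintZ : (Adig s b' : ℤ) = v * K + (Adig s b : ℤ) - k * s.factorial := by
    rw [hFb, hFb'] at hk
    have h4 : (Adig s b' : ℚ) / s.factorial
        = (v:ℚ) * K / s.factorial + (Adig s b : ℚ) / s.factorial - k := by
      rw [← h3]; linarith
    have h5 := congrArg (fun x : ℚ => x * (s.factorial : ℚ)) h4
    simp only [add_mul, sub_mul, div_mul_cancel₀ _ hsQ] at h5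
    exact_mod_cast h5
  have hdvdK : (K : ℤ) ∣ ((Adig s b : ℤ) - (Adig s b' : ℤ)) := by
    have h1 : (K : ℤ) ∣ (s.factorial : ℤ) :=
      Int.natCast_dvd_natCast.mpr ⟨t.factorial, hKt.symm⟩
    have h2 : (Adig s b : ℤ) - (Adig s b' : ℤ) = -((v:ℤ) * K) + k * s.factorial := by
      rw [hintZ]; ring
    rw [h2]
    exact dvd_add (dvd_neg.mpr (dvd_mul_left _ _)) (h1.mul_left k)
  have hmodeq : Adig s b' % K = Adig s b % K := Nat.modEq_iff_dvd.mpr hdvdK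
  have hdivmod := (adig_mod_eq_iff hts b' b).mp hmodeq
  have hlt1 : b' / t.factorial < K :=
    (Nat.div_lt_iff_lt_mul t.factorial_pos).mpr (by rw [← hKt] at hbs'; exact hbs')
  have hlt2 : b / t.factorial < K :=
    (Nat.div_lt_iff_lt_mul t.factorial_pos).mpr (by rw [← hKt] at hbs; exact hbs)
  rwa [Nat.mod_eq_of_lt hlt1, Nat.mod_eq_of_lt hlt2] at hdivmod

def eZfun : ℤ → ℕ := fun z => if 0 ≤ z then 2 * z.toNat else 2 * z.natAbs - 1

def eZinv : ℕ → ℤ := fun n => if n % 2 = 0 then ((n / 2 : ℕ) : ℤ) else -(((n+1)/2 : ℕ) : ℤ)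

def eZ : ℤ ≃ ℕ where
  toFun := eZfun
  invFun := eZinv
  left_inv := by
    intro z
    simp only [eZfun, eZinv]
    split_ifs <;> omega
  right_inv := by
    intro n
    simp only [eZfun, eZinv]
    split_ifs <;> omega

lemma eZfun_bound (n z : ℤ) :
    eZfun (n + z) ≤ eZfun z + (2 * n.natAbs + 1) ∧
    eZfun z ≤ eZfun (n + z) + (2 * n.natAbs + 1) := by
  simp only [eZfun]
  split_ifs <;> omega

def eSplit : ℕ ≃ ℕ ⊕ ℕ where
  toFun x := if x % 2 = 0 then Sum.inl (x / 2) else Sum.inr (x / 2)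
  invFun := Sum.elim (fun a => 2 * a) (fun b => 2 * b + 1)
  left_inv := by
    intro x
    by_cases h : x % 2 = 0 <;> simp [h] <;> omega
  right_inv := by
    rintro (a | b)
    · have h : (2 * a) % 2 = 0 := by omega
      have h2 : (2 * a) / 2 = a := by omega
      simp [h, h2]
    · have h : ¬((2 * b + 1) % 2 = 0) := by omega
      have h2 : (2 * b + 1) / 2 = b := by omega
      simp [h, h2]

noncomputable def E : ℕ ≃ ℤ ⊕ Q := eSplit.trans (Equiv.sumCongr eZ.symm eQ)

/-- the permutation of `ℤ ⊕ Q` given by translation. -/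
def S (g : ℤ × Q) : (ℤ ⊕ Q) ≃ (ℤ ⊕ Q) :=
  Equiv.sumCongr (Equiv.addLeft g.1) (Equiv.addLeft g.2)

noncomputable def Ψ (g : ℤ × Q) : Equiv.Perm ℕ := (E.trans ((S g).trans E.symm))

lemma Ψ_apply (g : ℤ × Q) (x : ℕ) : Ψ g x = E.symm (S g (E x)) := rfl

noncomputable def Φ : Multiplicative (ℤ × Q) →* Equiv.Perm ℕ where
  toFun g := Ψ (Multiplicative.toAdd g)
  map_one' := by
    ext x
    show E.symm (S 0 (E x)) = x
    have : S 0 (E x) = E x := by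
      rcases E x with z | q <;> simp [S]
    rw [this, Equiv.symm_apply_apply]
  map_mul' g h := by
    ext x
    show E.symm (S (Multiplicative.toAdd g + Multiplicative.toAdd h) (E x))
      = E.symm (S (Multiplicative.toAdd g) (E (E.symm (S (Multiplicative.toAdd h) (E x)))))
    rw [Equiv.apply_symm_apply]
    congr 1
    rcases E x with z | q <;> simp [S, add_assoc]

lemma nat_dist_le {a b c : ℕ} (h1 : a ≤ b + c) (h2 : b ≤ a + c) : dist a b ≤ (c : ℝ) := by
  have h1' : (a : ℝ) ≤ (b : ℝ) + (c : ℝ) := by exact_mod_cast h1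
  have h2' : (b : ℝ) ≤ (a : ℝ) + (c : ℝ) := by exact_mod_cast h2
  rw [Nat.dist_eq, abs_sub_le_iff]
  constructor <;> linarith

lemma Φ_mem (g : Multiplicative (ℤ × Q)) : Φ g ∈ Bd ℕ := by
  set n := (Multiplicative.toAdd g).1 with hn
  set q := (Multiplicative.toAdd g).2 with hq
  obtain ⟨m, hm⟩ := eQ_bound q
  refine ⟨4 * n.natAbs + 2 + 2 * m.factorial, fun x => ?_⟩
  have hΦ : Φ g x = E.symm (S (Multiplicative.toAdd g) (E x)) := rfl
  rw [hΦ]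
  by_cases hpar : x % 2 = 0
  · -- even case
    have h1 : eSplit x = Sum.inl (x / 2) := by simp [eSplit, hpar]
    have hEx : E x = Sum.inl (eZinv (x / 2)) := by
      show (Equiv.sumCongr eZ.symm eQ) (eSplit x) = _
      rw [h1]; rfl
    have hout : E.symm (S (Multiplicative.toAdd g) (E x))
        = 2 * eZfun (n + eZinv (x / 2)) := by
      rw [hEx]; rfl
    rw [hout]
    have hx2 : x = 2 * eZfun (eZinv (x / 2)) := by
      have : eZfun (eZinv (x / 2)) = x / 2 := eZ.right_inv (x / 2)
      omega
    obtain ⟨hb1, hb2⟩ := eZfun_bound n (eZinv (x / 2))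
    have hcle : 2 * (2 * n.natAbs + 1) ≤ 4 * n.natAbs + 2 + 2 * m.factorial := by omega
    exact le_trans (nat_dist_le (c := 2 * (2 * n.natAbs + 1)) (by omega) (by omega))
      (by exact_mod_cast hcle)
  · -- odd case
    have h1 : eSplit x = Sum.inr (x / 2) := by simp [eSplit, hpar]
    have hEx : E x = Sum.inr (eQ (x / 2)) := by
      show (Equiv.sumCongr eZ.symm eQ) (eSplit x) = _
      rw [h1]; rfl
    have hout : E.symm (S (Multiplicative.toAdd g) (E x))
        = 2 * eQ.symm (q + eQ (x / 2)) + 1 := by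
      rw [hEx]; rfl
    rw [hout]
    set b' := eQ.symm (q + eQ (x / 2)) with hb'
    have hdiv : b' / m.factorial = (x / 2) / m.factorial := hm (x / 2)
    have hfac : 0 < m.factorial := m.factorial_pos
    have hmod1 := Nat.mod_lt b' hfac
    have hmod2 := Nat.mod_lt (x / 2) hfac
    have he1 := Nat.mod_add_div b' m.factorial
    have he2 := Nat.mod_add_div (x / 2) m.factorial
    rw [hdiv] at he1
    have hclose : b' ≤ x / 2 + m.factorial ∧ x / 2 ≤ b' + m.factorial := by
      set P := m.factorial * (x / 2 / m.factorial) with hP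
      omega
    have hx2 : x = 2 * (x / 2) + 1 := by omega
    have hcle : 2 * m.factorial ≤ 4 * n.natAbs + 2 + 2 * m.factorial := by omega
    exact le_trans (nat_dist_le (c := 2 * m.factorial) (by omega) (by omega))
      (by exact_mod_cast hcle)

lemma Φ_injective : Function.Injective Φ := by
  rw [injective_iff_map_eq_one]
  intro g hg
  have hS1 : ∀ y : ℤ ⊕ Q, S (Multiplicative.toAdd g) y = y := by
    intro y
    have h1 : Ψ (Multiplicative.toAdd g) (E.symm y) = E.symm y := by
      rw [show Ψ (Multiplicative.toAdd g) = Φ g from rfl, hg]; rfl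
    have h2 : E.symm (S (Multiplicative.toAdd g) (E (E.symm y))) = E.symm y := h1
    rw [Equiv.apply_symm_apply] at h2
    exact E.symm.injective h2
  have hn : (Multiplicative.toAdd g).1 = 0 := by
    have := hS1 (Sum.inl 0)
    simp [S] at this
    exact this
  have hq : (Multiplicative.toAdd g).2 = 0 := by
    have := hS1 (Sum.inr 0)
    simp [S] at this
    exact this
  have : Multiplicative.toAdd g = 0 := Prod.ext hn hq
  simpa using this

end BdZQ

/-- `Bd(ℤ⁺)` (positive integers modelled by `ℕ`) contains a
subgroup isomorphic to `ℤ ⊕ ℚ/ℤ`. -/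
theorem bd_contains_Z_plus_Q_mod_Z :
    ∃ φ : Multiplicative (ℤ × (ℚ ⧸ AddSubgroup.zmultiples (1 : ℚ))) →* Bd ℕ,
      Function.Injective φ := by
  refine ⟨BdZQ.Φ.codRestrict (Bd ℕ) BdZQ.Φ_mem, ?_⟩
  intro a b hab
  exact BdZQ.Φ_injective (congrArg Subtype.val hab)
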